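/- arXiv:math/0608193 — 3 statements merged into one kernel-verified Lean document; each statement's English description precedes it below -/
import Mathlib

section
/- Let N ≥ 1, and let φ be the real-linear endomorphism of the space 𝒜_N of N×N complex antihermitian matrices given by φ(X) = ∑_{l=1}^{r} A_l X B_l for fixed complex N×N matrices A_l, B_l (assuming φ maps 𝒜_N to 𝒜_N). Then the trace of φ as a real-linear endomorphism equals ∑_{l=1}^{r} Tr(A_l) Tr(B_l). -/
open Matrix Finset

lemma stdBasis_repr' (n : ℕ) (x : Matrix (Fin n) (Fin n) ℂ) (ij : Fin n × Fin n) :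
    (Matrix.stdBasis ℂ (Fin n) (Fin n)).repr x ij = x ij.1 ij.2 := by
  simp [Matrix.stdBasis, Pi.basis_repr]

lemma trace_mulLeftRight (n : ℕ) (a b : Matrix (Fin n) (Fin n) ℂ) :
    LinearMap.trace ℂ _ ((LinearMap.mulLeft ℂ a).comp (LinearMap.mulRight ℂ b))
      = a.trace * b.trace := by
  rw [LinearMap.trace_eq_matrix_trace ℂ (Matrix.stdBasis ℂ (Fin n) (Fin n))]
  rw [Matrix.trace]
  have : ∀ ij : Fin n × Fin n,
      (LinearMap.toMatrix (Matrix.stdBasis ℂ (Fin n) (Fin n)) (Matrix.stdBasis ℂ (Fin n) (Fin n))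
        ((LinearMap.mulLeft ℂ a).comp (LinearMap.mulRight ℂ b))).diag ij
        = a ij.1 ij.1 * b ij.2 ij.2 := by
    rintro ⟨i, j⟩
    rw [Matrix.diag, LinearMap.toMatrix_apply, stdBasis_repr']
    simp [Matrix.stdBasis_eq_single, Matrix.mul_apply, Matrix.single,
      Finset.sum_ite_eq, ite_and]
  rw [Finset.sum_congr rfl fun ij _ => this ij, Matrix.trace, Matrix.trace,
    Finset.sum_mul_sum, ← Finset.sum_product']
  simp [Matrix.diag]

lemma trace_restrictScalars_real {M : Type*} [AddCommGroup M] [Module ℂ M]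
    [Module.Finite ℂ M] [Module.Free ℂ M] (f : M →ₗ[ℂ] M) :
    (LinearMap.trace ℝ M (f.restrictScalars ℝ) : ℂ)
      = 2 * ((LinearMap.trace ℂ M f).re : ℂ) := by
  let b := Module.Free.chooseBasis ℂ M
  let d := Complex.basisOneI.smulTower b
  rw [LinearMap.trace_eq_matrix_trace ℝ d, LinearMap.trace_eq_matrix_trace ℂ b]
  rw [Matrix.trace, Matrix.trace]
  have hd : ∀ ki, (LinearMap.toMatrix d d (f.restrictScalars ℝ)).diag ki
      = (Complex.basisOneI.repr (Complex.basisOneI ki.1 * (b.repr (f (b ki.2)) ki.2))) ki.1 := by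
    rintro ⟨k, i⟩
    rw [Matrix.diag, LinearMap.toMatrix_apply]
    have h1 : d (k, i) = Complex.basisOneI k • b i := Module.Basis.smulTower_apply _ _ _
    rw [h1]
    simp only [LinearMap.coe_restrictScalars, LinearMap.map_smul_of_tower, d]
    rw [Module.Basis.smulTower_repr, _root_.map_smul, Finsupp.smul_apply, smul_eq_mul]
  norm_cast
  rw [Finset.sum_congr rfl fun ki _ => hd ki, Fintype.sum_prod_type_right]
  rw [Complex.re_sum, Finset.mul_sum]
  refine Finset.sum_congr rfl fun i _ => ?_
  set z := b.repr (f (b i)) i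
  rw [Fin.sum_univ_two]
  simp [Complex.coe_basisOneI_repr, Complex.coe_basisOneI]
  rw [LinearMap.toMatrix_apply]
  ring

/-- If `φ` is a real-linear endomorphism of the space of `N × N` complex antihermitian
matrices given by `φ(X) = ∑ l, A l * X * B l`, then the trace of `φ` (as a real-linear
endomorphism) equals `∑ l, Tr(A l) * Tr(B l)`. -/
theorem trace_endomorphism_skewAdjoint
    (N : ℕ) (hN : 1 ≤ N) (r : ℕ) (A B : Fin r → Matrix (Fin N) (Fin N) ℂ)
    (φ : (skewAdjoint.submodule ℝ (Matrix (Fin N) (Fin N) ℂ)) →ₗ[ℝ]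
      (skewAdjoint.submodule ℝ (Matrix (Fin N) (Fin N) ℂ)))
    (hφ : ∀ X : skewAdjoint.submodule ℝ (Matrix (Fin N) (Fin N) ℂ),
      (φ X : Matrix (Fin N) (Fin N) ℂ) = ∑ l : Fin r, A l * (X : Matrix (Fin N) (Fin N) ℂ) * B l) :
    ((LinearMap.trace ℝ _ φ : ℝ) : ℂ) = ∑ l : Fin r, (A l).trace * (B l).trace := by
  have hmem : ∀ x : Matrix (Fin N) (Fin N) ℂ,
      x ∈ skewAdjoint.submodule ℝ (Matrix (Fin N) (Fin N) ℂ) ↔ xᴴ = -x := fun x =>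
    skewAdjoint.mem_iff
  set ψ : Matrix (Fin N) (Fin N) ℂ →ₗ[ℂ] Matrix (Fin N) (Fin N) ℂ :=
    ∑ l : Fin r, (LinearMap.mulLeft ℂ (A l)).comp (LinearMap.mulRight ℂ (B l)) with hψ
  set χ : Matrix (Fin N) (Fin N) ℂ →ₗ[ℂ] Matrix (Fin N) (Fin N) ℂ :=
    ∑ l : Fin r, (LinearMap.mulLeft ℂ (B l)ᴴ).comp (LinearMap.mulRight ℂ (A l)ᴴ) with hχ
  have hψa : ∀ M : Matrix (Fin N) (Fin N) ℂ, ψ M = ∑ l : Fin r, A l * M * B l := by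
    intro M
    rw [hψ]
    simp [LinearMap.sum_apply, mul_assoc]
  have hχa : ∀ M : Matrix (Fin N) (Fin N) ℂ, χ M = ∑ l : Fin r, (B l)ᴴ * M * (A l)ᴴ := by
    intro M
    rw [hχ]
    simp [LinearMap.sum_apply, mul_assoc]
  set s : ℂ := ∑ l : Fin r, (A l).trace * (B l).trace with hs
  have htψ : LinearMap.trace ℂ _ ψ = s := by
    rw [hψ, map_sum, hs]
    exact Finset.sum_congr rfl fun l _ => trace_mulLeftRight N (A l) (B l)
  -- ψ agrees with χ on skew-adjoint matrices
  have hskew : ∀ X : Matrix (Fin N) (Fin N) ℂ, Xᴴ = -X → χ X = ψ X := by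
    intro X hX
    have h1 := hφ ⟨X, (hmem X).2 hX⟩
    have h2 : ((φ ⟨X, (hmem X).2 hX⟩ : _) : Matrix (Fin N) (Fin N) ℂ)ᴴ
        = -((φ ⟨X, (hmem X).2 hX⟩ : _) : Matrix (Fin N) (Fin N) ℂ) :=
      (hmem _).1 (φ ⟨X, (hmem X).2 hX⟩).2
    rw [h1] at h2
    have h2' : (∑ l : Fin r, A l * X * B l)ᴴ = -(∑ l : Fin r, A l * X * B l) := by
      simpa using h2
    rw [hχa, hψa]
    calc ∑ l : Fin r, (B l)ᴴ * X * (A l)ᴴ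
        = -(∑ l : Fin r, A l * X * B l)ᴴ := by
          rw [conjTranspose_sum, ← Finset.sum_neg_distrib]
          refine Finset.sum_congr rfl fun l _ => ?_
          rw [conjTranspose_mul, conjTranspose_mul, hX]
          noncomm_ring
      _ = ∑ l : Fin r, A l * X * B l := by rw [h2', neg_neg]
  -- hence ψ = χ everywhere, so the trace s is real
  have hψχ : χ = ψ := by
    refine LinearMap.ext fun M => ?_
    have hst1 : star ((1:ℂ)/2) = (1:ℂ)/2 := by simp [Complex.ext_iff]
    have hst2 : star (-Complex.I/2) = Complex.I/2 := by simp [Complex.ext_iff]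
    have hS1 : (((1:ℂ)/2) • (M - Mᴴ))ᴴ = -(((1:ℂ)/2) • (M - Mᴴ)) := by
      rw [conjTranspose_smul, conjTranspose_sub, conjTranspose_conjTranspose, hst1,
        ← smul_neg, neg_sub]
    have hS2 : ((-Complex.I/2) • (M + Mᴴ))ᴴ = -((-Complex.I/2) • (M + Mᴴ)) := by
      rw [conjTranspose_smul, conjTranspose_add, conjTranspose_conjTranspose, hst2]
      match_scalars <;> ring
    have hdec : M = ((1:ℂ)/2) • (M - Mᴴ) + Complex.I • ((-Complex.I/2) • (M + Mᴴ)) := by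
      match_scalars <;> simp [Complex.ext_iff] <;> ring
    calc χ M = χ (((1:ℂ)/2) • (M - Mᴴ) + Complex.I • ((-Complex.I/2) • (M + Mᴴ))) := by
          rw [← hdec]
      _ = ψ M := by
          rw [map_add, hskew _ hS1, _root_.map_smul χ Complex.I, hskew _ hS2,
            ← _root_.map_smul ψ Complex.I, ← map_add, ← hdec]
  have hsconj : (starRingEnd ℂ) s = s := by
    have h1 : LinearMap.trace ℂ _ χ = (starRingEnd ℂ) s := by
      rw [hχ, map_sum, hs, map_sum]
      refine Finset.sum_congr rfl fun l _ => ?_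
      rw [trace_mulLeftRight, trace_conjTranspose, trace_conjTranspose, _root_.map_mul, mul_comm]
      rfl
    rw [← h1, hψχ, htψ]
  -- build the real-linear equivalence (S × S) ≃ Mat, (X, Y) ↦ X + I • Y
  set Sub := (skewAdjoint.submodule ℝ (Matrix (Fin N) (Fin N) ℂ)).subtype with hSub
  set L := Sub.coprod
      (((LinearMap.lsmul ℂ (Matrix (Fin N) (Fin N) ℂ) Complex.I).restrictScalars ℝ).comp Sub)
    with hLdef
  have hL : ∀ p, L p = (p.1 : Matrix (Fin N) (Fin N) ℂ) + Complex.I • (p.2 : Matrix (Fin N) (Fin N) ℂ) := by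
    intro p
    rw [hLdef]
    simp [hSub]
  have hinj : Function.Injective L := by
    rw [← LinearMap.ker_eq_bot]
    refine LinearMap.ker_eq_bot'.2 ?_
    rintro ⟨X, Y⟩ h
    rw [hL] at h
    have hX := (hmem _).1 X.2
    have hY := (hmem _).1 Y.2
    have h2 : ((X : Matrix (Fin N) (Fin N) ℂ) + Complex.I • (Y : Matrix (Fin N) (Fin N) ℂ))ᴴ
        = 0 := by rw [h, conjTranspose_zero]
    rw [conjTranspose_add, conjTranspose_smul, hX, hY, Complex.star_def, Complex.conj_I] at h2
    have h3 : (-Complex.I) • -(Y : Matrix (Fin N) (Fin N) ℂ)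
        = Complex.I • (Y : Matrix (Fin N) (Fin N) ℂ) := by
      rw [smul_neg, neg_smul, neg_neg]
    rw [h3] at h2
    have hX0 : (X : Matrix (Fin N) (Fin N) ℂ) = 0 := by
      have h4 : (X : Matrix (Fin N) (Fin N) ℂ) + (X : Matrix (Fin N) (Fin N) ℂ) = 0 := by
        have := congrArg₂ (· - ·) h h2
        simpa using this
      have h5 : (2:ℂ) • (X : Matrix (Fin N) (Fin N) ℂ) = 0 := by rw [two_smul]; exact h4
      rcases smul_eq_zero.1 h5 with h6 | h6
      · norm_num at h6
      · exact h6
    have hY0 : (Y : Matrix (Fin N) (Fin N) ℂ) = 0 := by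
      have h7 : Complex.I • (Y : Matrix (Fin N) (Fin N) ℂ) = 0 := by
        rw [hX0, zero_add] at h
        exact h
      rcases smul_eq_zero.1 h7 with h6 | h6
      · exact absurd h6 Complex.I_ne_zero
      · exact h6
    exact Prod.ext (Subtype.ext hX0) (Subtype.ext hY0)
  have hsk1 : ∀ M : Matrix (Fin N) (Fin N) ℂ,
      (((1:ℂ)/2) • (M - Mᴴ))ᴴ = -(((1:ℂ)/2) • (M - Mᴴ)) := by
    intro M
    have hst1 : star ((1:ℂ)/2) = (1:ℂ)/2 := by simp [Complex.ext_iff]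
    rw [conjTranspose_smul, conjTranspose_sub, conjTranspose_conjTranspose, hst1,
      ← smul_neg, neg_sub]
  have hsk2 : ∀ M : Matrix (Fin N) (Fin N) ℂ,
      ((-Complex.I/2) • (M + Mᴴ))ᴴ = -((-Complex.I/2) • (M + Mᴴ)) := by
    intro M
    have hst2 : star (-Complex.I/2) = Complex.I/2 := by simp [Complex.ext_iff]
    rw [conjTranspose_smul, conjTranspose_add, conjTranspose_conjTranspose, hst2]
    match_scalars <;> ring
  have hsurj : Function.Surjective L := by
    intro M
    refine ⟨(⟨((1:ℂ)/2) • (M - Mᴴ), (hmem _).2 (hsk1 M)⟩,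
      ⟨(-Complex.I/2) • (M + Mᴴ), (hmem _).2 (hsk2 M)⟩), ?_⟩
    rw [hL]
    show ((1:ℂ)/2) • (M - Mᴴ) + Complex.I • ((-Complex.I/2) • (M + Mᴴ)) = M
    match_scalars <;> simp [Complex.ext_iff] <;> ring
  set e := LinearEquiv.ofBijective L ⟨hinj, hsurj⟩ with he
  have hec : ∀ p, e p = L p := fun p => rfl
  have hc : e.conj (φ.prodMap φ) = ψ.restrictScalars ℝ := by
    refine LinearMap.ext fun M => ?_
    obtain ⟨p, rfl⟩ := e.surjective M
    rw [LinearEquiv.conj_apply]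
    simp only [LinearMap.coe_comp, Function.comp_apply, LinearEquiv.coe_coe,
      LinearEquiv.symm_apply_apply, LinearMap.coe_restrictScalars]
    rw [LinearMap.prodMap_apply, hec, hec, hL, hL]
    simp only [LinearMap.prodMap_apply]
    rw [hφ p.1, hφ p.2, ← hψa, ← hψa, ← _root_.map_smul ψ Complex.I, ← map_add]
  have htr : LinearMap.trace ℝ _ (ψ.restrictScalars ℝ)
      = LinearMap.trace ℝ _ φ + LinearMap.trace ℝ _ φ := by
    rw [← hc, LinearMap.trace_conj', LinearMap.trace_prodMap']
  have hre := trace_restrictScalars_real ψ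
  rw [htψ, htr] at hre
  have hsim : s.im = 0 := by
    have h8 := congrArg Complex.im hsconj
    rw [Complex.conj_im] at h8
    linarith
  have hsre : s = ((s.re : ℝ) : ℂ) := by
    rw [Complex.ext_iff]
    simp [hsim]
  have h9 : LinearMap.trace ℝ _ φ + LinearMap.trace ℝ _ φ = s.re + s.re := by
    have h10 : ((LinearMap.trace ℝ _ φ + LinearMap.trace ℝ _ φ : ℝ) : ℂ)
        = ((s.re + s.re : ℝ) : ℂ) := by
      rw [hre]
      push_cast
      ring
    exact_mod_cast h10
  have h11 : LinearMap.trace ℝ _ φ = s.re := by linarith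
  rw [h11, ← hsre]
end

section
/- Let A, B, n, D be positive constants with A > 4^{n+1} and B > 2nD(4A)^D, let C_k denote Catalan numbers, and set D_0 = 0, D_p = A^{p-1} C_{p-1} for p ≥ 1. Then for every p ≥ 1 and every multi-index k ∈ ℕ^n: 2 ∑_{0<q<p} ∑_{k'+k''=k} C_{k'} B^{|k'|} D_q C_{k''} B^{|k''|} D_{p−q} + nD C_k B^{|k|−1} (4A)^D D_p ≤ C_{k+1_j} B^{|k|+1} D_p for each j, where C_k = ∏_i C_{k_i}, |k| = ∑ k_i, and 1_j is the j-th coordinate vector. -/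
open Finset

private lemma catalan_pos' (m : ℕ) : 0 < catalan m := by
  have h := succ_mul_catalan_eq_centralBinom m
  have h2 := Nat.centralBinom_pos m
  rcases Nat.eq_zero_or_pos (catalan m) with h0 | h0
  · rw [h0, mul_zero] at h; omega
  · exact h0

private lemma catalan_succ_le_four_mul (m : ℕ) : catalan (m + 1) ≤ 4 * catalan m := by
  have h1 := succ_mul_catalan_eq_centralBinom m
  have h2 := succ_mul_catalan_eq_centralBinom (m+1)
  have h3 := Nat.succ_mul_centralBinom_succ m
  have key : (m+1) * ((m+2) * catalan (m+1)) ≤ (m+1) * ((m+2) * (4 * catalan m)) := by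
    nlinarith [Nat.centralBinom_pos m]
  exact Nat.le_of_mul_le_mul_left (Nat.le_of_mul_le_mul_left key (by omega)) (by omega)

private lemma catalan_le_succ (m : ℕ) : catalan m ≤ catalan (m + 1) := by
  have h1 := succ_mul_catalan_eq_centralBinom m
  have h2 := succ_mul_catalan_eq_centralBinom (m+1)
  have h3 := Nat.succ_mul_centralBinom_succ m
  have key : (m+1) * ((m+2) * catalan m) ≤ (m+1) * ((m+2) * catalan (m+1)) := by
    nlinarith [Nat.centralBinom_pos m]
  exact Nat.le_of_mul_le_mul_left (Nat.le_of_mul_le_mul_left key (by omega)) (by omega)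

private lemma sum_Iic_catalan_prod {n : ℕ} (k : Fin n → ℕ) :
    ∑ k' ∈ Finset.Iic k, (∏ i, (catalan (k' i) : ℝ)) * (∏ i, (catalan (k i - k' i) : ℝ))
      = ∏ i, (catalan (k i + 1) : ℝ) := by
  have hIic : (Finset.Iic k) = Fintype.piFinset fun i => Finset.Iic (k i) := by
    ext x; simp [Fintype.mem_piFinset, Pi.le_def]
  have hrange : ∀ m : ℕ, Finset.Iic m = Finset.range (m+1) := by
    intro m; ext x; simp [Nat.lt_succ_iff]
  have key := Finset.prod_univ_sum (fun i => Finset.Iic (k i))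
      (fun i m => (catalan m : ℝ) * (catalan (k i - m) : ℝ))
  simp only [← Finset.prod_mul_distrib]
  rw [hIic, ← key]
  refine Finset.prod_congr rfl fun i _ => ?_
  rw [hrange]
  norm_cast
  rw [← Fin.sum_univ_eq_sum_range (fun m => catalan m * catalan (k i - m)), ← catalan_succ]

private lemma sum_range_catalan (m : ℕ) :
    ∑ i ∈ Finset.range (m+1), (catalan i : ℝ) * (catalan (m - i) : ℝ) = (catalan (m+1) : ℝ) := by
  norm_cast
  rw [← Fin.sum_univ_eq_sum_range (fun i => catalan i * catalan (m - i)), ← catalan_succ]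

/-- The key inductive estimate for analyticity of the formal solution of the
Schwinger-Dyson equation. With Catalan numbers `C`, `D_0 = 0`, `D_p = A^(p-1) C_(p-1)`,
`C_k = ∏ C_(k i)`, `|k| = ∑ k i`, for `A > 4^(n+1)` and `B > 2nD(4A)^D`:
`2 ∑_{0<q<p} ∑_{k'+k''=k} C_{k'} B^{|k'|} D_q C_{k''} B^{|k''|} D_{p-q}
  + nD C_k B^{|k|-1} (4A)^D D_p ≤ C_{k+1_j} B^{|k|+1} D_p`. -/
theorem inductive_estimate
    (n D : ℕ) (hn : 0 < n) (hD : 0 < D) (A B : ℝ)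
    (hA : (4 : ℝ) ^ (n + 1) < A) (hB : 2 * n * D * (4 * A) ^ D < B)
    (Dseq : ℕ → ℝ) (hD0 : Dseq 0 = 0)
    (hDseq : ∀ p : ℕ, 1 ≤ p → Dseq p = A ^ (p - 1) * (catalan (p - 1) : ℝ)) :
    ∀ (p : ℕ), 1 ≤ p → ∀ (k : Fin n → ℕ) (j : Fin n),
      2 * ∑ q ∈ Finset.Ico 1 p, ∑ k' ∈ Finset.Iic k,
          ((∏ i, (catalan (k' i) : ℝ)) * B ^ (∑ i, k' i) * Dseq q)
            * ((∏ i, (catalan (k i - k' i) : ℝ)) * B ^ (∑ i, (k i - k' i)) * Dseq (p - q))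
        + (n : ℝ) * D * (∏ i, (catalan (k i) : ℝ)) * (B ^ (∑ i, k i) / B)
            * (4 * A) ^ D * Dseq p
      ≤ (∏ i, (catalan (k i + if i = j then 1 else 0) : ℝ)) * B ^ ((∑ i, k i) + 1) * Dseq p := by
  intro p hp k j
  -- positivity facts
  have hA0 : (0 : ℝ) < A := lt_trans (by positivity) hA
  have hA4 : 4 * (4 : ℝ) ^ n < A := by
    have h : (4 : ℝ) ^ (n + 1) = 4 * 4 ^ n := by ring
    linarith [h ▸ hA]
  have hAge4 : (4 : ℝ) ≤ A := by
    have h4 : (4 : ℝ) ≤ 4 ^ (n + 1) := le_self_pow₀ (by norm_num) (by omega)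
    linarith
  have h4AD : (1 : ℝ) ≤ (4 * A) ^ D := one_le_pow₀ (by linarith)
  have hn1 : (1 : ℝ) ≤ n := by exact_mod_cast hn
  have hD1 : (1 : ℝ) ≤ D := by exact_mod_cast hD
  have hB2 : (2 : ℝ) ≤ B := by
    have hnD : (1 : ℝ) ≤ (n : ℝ) * D := by nlinarith
    have h3 : (1 : ℝ) * 1 ≤ ((n : ℝ) * D) * (4 * A) ^ D :=
      mul_le_mul hnD h4AD (by norm_num) (by linarith)
    nlinarith [hB, h3]
  have hB0 : (0 : ℝ) < B := by linarith
  have hDnn : ∀ m, 0 ≤ Dseq m := by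
    intro m
    rcases Nat.eq_zero_or_pos m with rfl | hm
    · rw [hD0]
    · rw [hDseq m hm]
      have := catalan_pos' (m - 1)
      positivity
  have hDp : 0 < Dseq p := by
    rw [hDseq p hp]
    have := catalan_pos' (p - 1)
    positivity
  have hCk : (0 : ℝ) < ∏ i, (catalan (k i) : ℝ) :=
    Finset.prod_pos fun i _ => by exact_mod_cast catalan_pos' (k i)
  set Ck : ℝ := ∏ i, (catalan (k i) : ℝ) with hCkdef
  set T : ℝ := ∏ i, (catalan (k i + 1) : ℝ) with hTdef
  set Bp : ℝ := B ^ (∑ i, k i) with hBpdef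
  set Sq : ℝ := ∑ q ∈ Finset.Ico 1 p, Dseq q * Dseq (p - q) with hSqdef
  have hSq0 : 0 ≤ Sq := Finset.sum_nonneg fun q _ => mul_nonneg (hDnn q) (hDnn (p - q))
  have hT0 : 0 ≤ T := Finset.prod_nonneg fun i _ => by positivity
  -- convolution bound
  have hconv : Sq ≤ Dseq p / A := by
    rcases Nat.lt_or_ge p 2 with h2 | h2
    · have hp1 : p = 1 := by omega
      subst hp1
      have : Sq = 0 := by rw [hSqdef]; simp
      rw [this]
      exact le_of_lt (div_pos hDp hA0)
    · obtain ⟨m, rfl⟩ : ∃ m, p = m + 2 := ⟨p - 2, by omega⟩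
      have hterm : ∀ i ∈ Finset.range (m + 1),
          Dseq (1 + i) * Dseq (m + 2 - (1 + i))
            = A ^ m * ((catalan i : ℝ) * (catalan (m - i) : ℝ)) := by
        intro i hi
        have him : i ≤ m := by simpa [Nat.lt_succ_iff] using hi
        rw [hDseq (1 + i) (by omega), hDseq (m + 2 - (1 + i)) (by omega)]
        have e1 : 1 + i - 1 = i := by omega
        have e2 : m + 2 - (1 + i) - 1 = m - i := by omega
        rw [e1, e2]
        calc A ^ i * (catalan i : ℝ) * (A ^ (m - i) * (catalan (m - i) : ℝ))
            = A ^ (i + (m - i)) * ((catalan i : ℝ) * (catalan (m - i) : ℝ)) := by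
              rw [pow_add]; ring
          _ = A ^ m * ((catalan i : ℝ) * (catalan (m - i) : ℝ)) := by
              rw [show i + (m - i) = m by omega]
      have hSqeq : Sq = A ^ m * (catalan (m + 1) : ℝ) := by
        rw [hSqdef, Finset.sum_Ico_eq_sum_range]
        simp only [show m + 2 - 1 = m + 1 from rfl]
        rw [Finset.sum_congr rfl hterm, ← Finset.mul_sum, sum_range_catalan]
      rw [hSqeq, hDseq (m + 2) (by omega)]
      have e3 : m + 2 - 1 = m + 1 := rfl
      rw [e3, le_div_iff₀ hA0]
      apply le_of_eq
      rw [pow_succ]; ring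
  -- factor the double sum
  have hS1 : (∑ q ∈ Finset.Ico 1 p, ∑ k' ∈ Finset.Iic k,
        ((∏ i, (catalan (k' i) : ℝ)) * B ^ (∑ i, k' i) * Dseq q)
          * ((∏ i, (catalan (k i - k' i) : ℝ)) * B ^ (∑ i, (k i - k' i)) * Dseq (p - q)))
      = T * Bp * Sq := by
    have inner : ∀ q : ℕ, (∑ k' ∈ Finset.Iic k,
        ((∏ i, (catalan (k' i) : ℝ)) * B ^ (∑ i, k' i) * Dseq q)
          * ((∏ i, (catalan (k i - k' i) : ℝ)) * B ^ (∑ i, (k i - k' i)) * Dseq (p - q)))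
        = T * Bp * (Dseq q * Dseq (p - q)) := by
      intro q
      have h1 : ∀ k' ∈ Finset.Iic k,
          ((∏ i, (catalan (k' i) : ℝ)) * B ^ (∑ i, k' i) * Dseq q)
            * ((∏ i, (catalan (k i - k' i) : ℝ)) * B ^ (∑ i, (k i - k' i)) * Dseq (p - q))
          = ((∏ i, (catalan (k' i) : ℝ)) * (∏ i, (catalan (k i - k' i) : ℝ)))
              * (Bp * (Dseq q * Dseq (p - q))) := by
        intro k' hk'
        have hle : k' ≤ k := Finset.mem_Iic.mp hk'
        have hsum : (∑ i, k' i) + (∑ i, (k i - k' i)) = ∑ i, k i := by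
          rw [← Finset.sum_add_distrib]
          exact Finset.sum_congr rfl fun i _ => by have h2 : k' i ≤ k i := hle i; omega
        calc ((∏ i, (catalan (k' i) : ℝ)) * B ^ (∑ i, k' i) * Dseq q)
              * ((∏ i, (catalan (k i - k' i) : ℝ)) * B ^ (∑ i, (k i - k' i)) * Dseq (p - q))
            = ((∏ i, (catalan (k' i) : ℝ)) * (∏ i, (catalan (k i - k' i) : ℝ)))
                * (B ^ ((∑ i, k' i) + (∑ i, (k i - k' i))) * (Dseq q * Dseq (p - q))) := by
              rw [pow_add]; ring
          _ = ((∏ i, (catalan (k' i) : ℝ)) * (∏ i, (catalan (k i - k' i) : ℝ)))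
                * (Bp * (Dseq q * Dseq (p - q))) := by rw [hsum]
      rw [Finset.sum_congr rfl h1, ← Finset.sum_mul, sum_Iic_catalan_prod]
      rw [← hTdef]; ring
    rw [Finset.sum_congr rfl fun q _ => inner q, ← Finset.mul_sum]
  -- Catalan product bounds
  have hT : T ≤ 4 ^ n * Ck := by
    calc T ≤ ∏ i, (4 * (catalan (k i) : ℝ)) := by
          refine Finset.prod_le_prod (fun i _ => by positivity) (fun i _ => ?_)
          exact_mod_cast catalan_succ_le_four_mul (k i)
      _ = 4 ^ n * Ck := by
          rw [Finset.prod_mul_distrib, Finset.prod_const, Finset.card_univ, Fintype.card_fin]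
  have hRHS : Ck ≤ ∏ i, (catalan (k i + if i = j then 1 else 0) : ℝ) := by
    refine Finset.prod_le_prod (fun i _ => by positivity) (fun i _ => ?_)
    by_cases h : i = j
    · simp only [h, if_pos rfl]
      exact_mod_cast catalan_le_succ (k j)
    · simp [h]
  -- scalar inequality
  have hmain : 2 * (4 : ℝ) ^ n / A + ((n : ℝ) * D * (4 * A) ^ D) / B ≤ B := by
    have e1 : 2 * (4 : ℝ) ^ n / A ≤ 1 / 2 := by
      rw [div_le_iff₀ hA0]; nlinarith
    have e2 : ((n : ℝ) * D * (4 * A) ^ D) / B ≤ 1 / 2 := by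
      rw [div_le_iff₀ hB0]; nlinarith
    linarith
  -- final chain
  rw [hS1]
  have step2 : 2 * (T * Bp * Sq) ≤ 2 * ((4 ^ n * Ck) * Bp * (Dseq p / A)) := by
    have h1 : T * Sq ≤ (4 ^ n * Ck) * (Dseq p / A) :=
      mul_le_mul hT hconv hSq0 (by positivity)
    calc 2 * (T * Bp * Sq) = (2 * Bp) * (T * Sq) := by ring
      _ ≤ (2 * Bp) * ((4 ^ n * Ck) * (Dseq p / A)) := by
          apply mul_le_mul_of_nonneg_left h1; positivity
      _ = 2 * ((4 ^ n * Ck) * Bp * (Dseq p / A)) := by ring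
  have step3 : 2 * ((4 ^ n * Ck) * Bp * (Dseq p / A))
      + (n : ℝ) * D * Ck * (Bp / B) * (4 * A) ^ D * Dseq p ≤ Ck * (Bp * B) * Dseq p := by
    have ht1 : (0 : ℝ) < Ck * Bp * Dseq p := by positivity
    calc 2 * ((4 ^ n * Ck) * Bp * (Dseq p / A))
          + (n : ℝ) * D * Ck * (Bp / B) * (4 * A) ^ D * Dseq p
        = (Ck * Bp * Dseq p) * (2 * (4 : ℝ) ^ n / A + ((n : ℝ) * D * (4 * A) ^ D) / B) := by
          ring
      _ ≤ (Ck * Bp * Dseq p) * B := mul_le_mul_of_nonneg_left hmain (le_of_lt ht1)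
      _ = Ck * (Bp * B) * Dseq p := by ring
  have step4 : Ck * (Bp * B) * Dseq p
      ≤ (∏ i, (catalan (k i + if i = j then 1 else 0) : ℝ)) * B ^ ((∑ i, k i) + 1) * Dseq p := by
    rw [pow_succ, ← hBpdef]
    apply mul_le_mul_of_nonneg_right _ (le_of_lt hDp)
    apply mul_le_mul_of_nonneg_right hRHS (by positivity)
  linarith
end

section
/- Let (𝒜, φ) be a noncommutative probability space, a_1, ..., a_n elements of a unital subalgebra 𝒜₀, and u a Haar unitary free from 𝒜₀ (i.e., φ(u^k) = 0 for all k ∈ ℤ \ {0} and the algebra generated by u, u* is free from 𝒜₀). Then for every polynomial P in u, u*, a_1, ..., a_n and for the free-difference quotient ∂ with respect to u (defined by ∂u = u ⊗ 1, ∂u* = −1 ⊗ u*, ∂a_i = 0, Leibniz rule), one has φ ⊗ φ(∂P) = 0. -/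
open Sum List

namespace HaarSD

variable {A : Type*} [Ring A] [Algebra ℂ A]

/-- letter evaluation -/
def gl (u us : A) {A₀ : Subalgebra ℂ A} : Bool ⊕ ↥A₀ → A :=
  Sum.elim (fun b => if b then u else us) (fun b => (b : A))

@[simp] lemma gl_true (u us : A) {A₀ : Subalgebra ℂ A} :
    gl u us (inl true : Bool ⊕ ↥A₀) = u := rfl

@[simp] lemma gl_false (u us : A) {A₀ : Subalgebra ℂ A} :
    gl u us (inl false : Bool ⊕ ↥A₀) = us := rfl

@[simp] lemma gl_inr (u us : A) {A₀ : Subalgebra ℂ A} (b : ↥A₀) :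
    gl u us (inr b : Bool ⊕ ↥A₀) = (b : A) := rfl

/-- word evaluation -/
def ev (u us : A) {A₀ : Subalgebra ℂ A} (L : List (Bool ⊕ ↥A₀)) : A :=
  (L.map (gl u us)).prod

@[simp] lemma ev_nil (u us : A) {A₀ : Subalgebra ℂ A} :
    ev u us ([] : List (Bool ⊕ ↥A₀)) = 1 := rfl

@[simp] lemma ev_cons (u us : A) {A₀ : Subalgebra ℂ A} (x : Bool ⊕ ↥A₀) (t) :
    ev u us (x :: t) = gl u us x * ev u us t := by
  simp [ev]

@[simp] lemma ev_append (u us : A) {A₀ : Subalgebra ℂ A} (L1 L2 : List (Bool ⊕ ↥A₀)) :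
    ev u us (L1 ++ L2) = ev u us L1 * ev u us L2 := by
  simp [ev]

/-- the Schwinger–Dyson sum with left context `p` and right context `q` -/
def Tc (φ : A →ₗ[ℂ] ℂ) (u us : A) {A₀ : Subalgebra ℂ A} :
    A → List (Bool ⊕ ↥A₀) → A → ℂ
  | _, [], _ => 0
  | p, x :: t, q =>
    (match x with
      | .inl true => φ (p * u) * φ (ev u us t * q)
      | .inl false => -(φ p * φ (us * (ev u us t * q)))
      | .inr _ => 0) + Tc φ u us (p * gl u us x) t q

@[simp] lemma Tc_nil (φ : A →ₗ[ℂ] ℂ) (u us : A) {A₀ : Subalgebra ℂ A} (p q : A) :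
    Tc φ u us p ([] : List (Bool ⊕ ↥A₀)) q = 0 := rfl

lemma Tc_cons (φ : A →ₗ[ℂ] ℂ) (u us : A) {A₀ : Subalgebra ℂ A} (p q : A)
    (x : Bool ⊕ ↥A₀) (t) :
    Tc φ u us p (x :: t) q =
    (match x with
      | .inl true => φ (p * u) * φ (ev u us t * q)
      | .inl false => -(φ p * φ (us * (ev u us t * q)))
      | .inr _ => 0) + Tc φ u us (p * gl u us x) t q := rfl

@[simp] lemma Tc_cons_u (φ : A →ₗ[ℂ] ℂ) (u us : A) {A₀ : Subalgebra ℂ A} (p q : A) (t) :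
    Tc φ u us p ((inl true : Bool ⊕ ↥A₀) :: t) q =
      φ (p * u) * φ (ev u us t * q) + Tc φ u us (p * u) t q := by
  rw [Tc_cons]; simp [gl]

@[simp] lemma Tc_cons_us (φ : A →ₗ[ℂ] ℂ) (u us : A) {A₀ : Subalgebra ℂ A} (p q : A) (t) :
    Tc φ u us p ((inl false : Bool ⊕ ↥A₀) :: t) q =
      -(φ p * φ (us * (ev u us t * q))) + Tc φ u us (p * us) t q := by
  rw [Tc_cons]; simp [gl]

@[simp] lemma Tc_cons_b (φ : A →ₗ[ℂ] ℂ) (u us : A) {A₀ : Subalgebra ℂ A} (p q : A)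
    (b : ↥A₀) (t) :
    Tc φ u us p ((inr b : Bool ⊕ ↥A₀) :: t) q = Tc φ u us (p * (b : A)) t q := by
  rw [Tc_cons]; simp [gl]

lemma Tc_split (φ : A →ₗ[ℂ] ℂ) (u us : A) {A₀ : Subalgebra ℂ A}
    (L1 L2 : List (Bool ⊕ ↥A₀)) (p q : A) :
    Tc φ u us p (L1 ++ L2) q =
      Tc φ u us p L1 (ev u us L2 * q) + Tc φ u us (p * ev u us L1) L2 q := by
  induction L1 generalizing p with
  | nil => simp
  | cons x t ih =>
    rcases x with c | b
    · cases c <;> simp [ih, mul_assoc] <;> ring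
    · simp [ih, mul_assoc]

lemma Tc_addQ (φ : A →ₗ[ℂ] ℂ) (u us : A) {A₀ : Subalgebra ℂ A}
    (L : List (Bool ⊕ ↥A₀)) (p q1 q2 : A) :
    Tc φ u us p L (q1 + q2) = Tc φ u us p L q1 + Tc φ u us p L q2 := by
  induction L generalizing p with
  | nil => simp
  | cons x t ih =>
    rcases x with c | b
    · cases c <;> simp [ih, mul_add] <;> ring
    · simp [ih]

lemma Tc_smulQ (φ : A →ₗ[ℂ] ℂ) (u us : A) {A₀ : Subalgebra ℂ A}
    (L : List (Bool ⊕ ↥A₀)) (p q : A) (c : ℂ) :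
    Tc φ u us p L (c • q) = c * Tc φ u us p L q := by
  induction L generalizing p with
  | nil => simp
  | cons x t ih =>
    rcases x with c' | b
    · cases c' <;> simp [ih, mul_smul_comm] <;> ring
    · simp [ih]

lemma Tc_addP (φ : A →ₗ[ℂ] ℂ) (u us : A) {A₀ : Subalgebra ℂ A}
    (L : List (Bool ⊕ ↥A₀)) (p1 p2 q : A) :
    Tc φ u us (p1 + p2) L q = Tc φ u us p1 L q + Tc φ u us p2 L q := by
  induction L generalizing p1 p2 with
  | nil => simp
  | cons x t ih =>
    rcases x with c | b
    · cases c <;> simp [add_mul, ih] <;> ring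
    · simp [add_mul, ih]

lemma Tc_smulP (φ : A →ₗ[ℂ] ℂ) (u us : A) {A₀ : Subalgebra ℂ A}
    (L : List (Bool ⊕ ↥A₀)) (p q : A) (c : ℂ) :
    Tc φ u us (c • p) L q = c * Tc φ u us p L q := by
  induction L generalizing p with
  | nil => simp
  | cons x t ih =>
    rcases x with c' | b
    · cases c' <;> simp [smul_mul_assoc, ih] <;> ring
    · simp [smul_mul_assoc, ih]


/-- admissible adjacency for a reduced word -/
def Rrel {A₀ : Subalgebra ℂ A} : (Bool ⊕ ↥A₀) → (Bool ⊕ ↥A₀) → Prop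
  | inl c, inl c' => c = c'
  | inr _, inr _ => False
  | _, _ => True

@[simp] lemma Rrel_inl_inl {A₀ : Subalgebra ℂ A} (c c' : Bool) :
    Rrel (inl c : Bool ⊕ ↥A₀) (inl c') ↔ c = c' := Iff.rfl

@[simp] lemma Rrel_inr_inr {A₀ : Subalgebra ℂ A} (b b' : ↥A₀) :
    Rrel (inr b : Bool ⊕ ↥A₀) (inr b') ↔ False := Iff.rfl

@[simp] lemma Rrel_inl_inr {A₀ : Subalgebra ℂ A} (c : Bool) (b : ↥A₀) :
    Rrel (inl c : Bool ⊕ ↥A₀) (inr b) := trivial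

@[simp] lemma Rrel_inr_inl {A₀ : Subalgebra ℂ A} (c : Bool) (b : ↥A₀) :
    Rrel (inr b : Bool ⊕ ↥A₀) (inl c) := trivial

/-- centered letter -/
def cent (φ : A →ₗ[ℂ] ℂ) {A₀ : Subalgebra ℂ A} : (Bool ⊕ ↥A₀) → Prop
  | inl _ => True
  | inr b => φ (b : A) = 0

@[simp] lemma cent_inl (φ : A →ₗ[ℂ] ℂ) {A₀ : Subalgebra ℂ A} (c : Bool) :
    cent φ (inl c : Bool ⊕ ↥A₀) := trivial

@[simp] lemma cent_inr (φ : A →ₗ[ℂ] ℂ) {A₀ : Subalgebra ℂ A} (b : ↥A₀) :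
    cent φ (inr b : Bool ⊕ ↥A₀) ↔ φ (b : A) = 0 := Iff.rfl

def push (u us : A) (c : Bool) : List (A × Bool) → List (A × Bool)
  | (y, true) :: r => ((if c then u else us) * y, true) :: r
  | r => ((if c then u else us), true) :: r

def blocks (u us : A) {A₀ : Subalgebra ℂ A} : List (Bool ⊕ ↥A₀) → List (A × Bool)
  | [] => []
  | inr b :: t => ((b : A), false) :: blocks u us t
  | inl c :: t => push u us c (blocks u us t)

lemma blocks_spec (φ : A →ₗ[ℂ] ℂ) (u us : A) {A₀ : Subalgebra ℂ A}
    (hmom : ∀ k : ℕ, 1 ≤ k → φ (u ^ k) = 0 ∧ φ (us ^ k) = 0) :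
    ∀ L : List (Bool ⊕ ↥A₀), L.Chain' Rrel → (∀ x ∈ L, cent φ x) →
    ((blocks u us L).map Prod.fst).prod = ev u us L ∧
    (blocks u us L).Chain' (fun p q => p.2 ≠ q.2) ∧
    (∀ p ∈ blocks u us L,
      (if p.2 then p.1 ∈ Algebra.adjoin ℂ ({u, us} : Set A) else p.1 ∈ A₀)
        ∧ φ p.1 = 0) ∧
    (∀ c t', L = inl c :: t' → ∃ (k : ℕ) (R : List (A × Bool)),
        blocks u us L = ((if c then u else us) ^ (k + 1), true) :: R) ∧
    (∀ (b : ↥A₀) t', L = inr b :: t' → ∃ R : List (A × Bool),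
        blocks u us L = ((b : A), false) :: R) := by
  intro L
  induction L with
  | nil =>
    intro _ _
    exact ⟨by simp [blocks], by simp [blocks, Chain'], by simp [blocks], by simp, by simp⟩
  | cons x t ih =>
    intro hch hcent
    have hcht : t.Chain' Rrel := hch.tail
    have hcentt : ∀ x ∈ t, cent φ x := fun y hy => hcent y (mem_cons_of_mem _ hy)
    obtain ⟨ihprod, ihch, ihmem, ihheadl, ihheadr⟩ := ih hcht hcentt
    have hadj : ∀ y ∈ t.head?, Rrel x y := (isChain_cons.1 hch).1
    have hw : ∀ c : Bool, (if c then u else us) ∈ Algebra.adjoin ℂ ({u, us} : Set A) := by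
      intro c; cases c <;> exact Algebra.subset_adjoin (by simp)
    have hw0 : ∀ (c : Bool) (m : ℕ), φ ((if c then u else us) ^ (m + 1)) = 0 := by
      intro c m; cases c
      · simpa using (hmom (m+1) (by omega)).2
      · simpa using (hmom (m+1) (by omega)).1
    rcases x with c | b
    · -- head is a unitary letter
      rcases t with _ | ⟨y, t'⟩
      · refine ⟨by cases c <;> simp [blocks, push, ev],
          by simp [blocks, push, Chain'], ?_, ?_, by simp⟩
        · intro p hp
          simp only [blocks, push, mem_singleton] at hp
          subst hp
          exact ⟨by simpa using hw c, by simpa using hw0 c 0⟩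
        · intro c' t'' h
          injection h with h1 h2
          injection h1 with h3
          subst h3
          exact ⟨0, [], by simp [blocks, push]⟩
      · rcases y with c' | b'
        · -- t starts with a unitary letter; by Rrel, c' = c
          have hcc : c = c' := hadj (inl c') rfl
          subst hcc
          obtain ⟨k, R, hR⟩ := ihheadl c _ rfl
          have hb : blocks u us (inl c :: inl c :: t') =
              ((if c then u else us) ^ (k + 2), true) :: R := by
            show push u us c (blocks u us (inl c :: t')) = _
            rw [hR]
            show push u us c (((if c then u else us) ^ (k + 1), true) :: R) = _
            rw [push]
            congr 2
            exact (pow_succ' _ (k+1)).symm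
          refine ⟨?_, ?_, ?_, ?_, by simp⟩
          · rw [hb]
            rw [hR] at ihprod
            simp only [map_cons, prod_cons] at ihprod ⊢
            rw [ev_cons, ← ihprod, pow_succ', mul_assoc]
            cases c <;> simp
          · rw [hb]
            rw [hR] at ihch
            simp only [Chain', isChain_cons] at ihch ⊢
            exact ⟨ihch.1, ihch.2⟩
          · intro p hp
            rw [hb] at hp
            rcases mem_cons.1 hp with h | h
            · subst h
              exact ⟨by simpa using Subalgebra.pow_mem _ (hw c) _, hw0 c (k+1)⟩
            · exact ihmem p (by rw [hR]; exact mem_cons_of_mem _ h)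
          · intro c'' t'' h
            injection h with h1 h2
            injection h1 with h3
            subst h3
            exact ⟨k + 1, R, hb⟩
        · -- t starts with a subalgebra letter
          obtain ⟨R, hR⟩ := ihheadr b' _ rfl
          have hb : blocks u us (inl c :: inr b' :: t') =
              ((if c then u else us), true) :: ((b' : A), false) :: R := by
            show push u us c (blocks u us (inr b' :: t')) = _
            rw [hR]
            rfl
          refine ⟨?_, ?_, ?_, ?_, by simp⟩
          · rw [hb]
            rw [hR] at ihprod
            simp only [map_cons, prod_cons] at ihprod ⊢
            rw [ev_cons, ← ihprod]
            cases c <;> simp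
          · rw [hb]; simp only [Chain']; rw [isChain_cons_cons]
            refine ⟨by simp, ?_⟩
            rw [hR] at ihch
            exact ihch
          · intro p hp
            rw [hb] at hp
            rcases mem_cons.1 hp with h | h
            · subst h
              exact ⟨by simpa using hw c, by simpa using hw0 c 0⟩
            · exact ihmem p (by rw [hR]; exact h)
          · intro c'' t'' h
            injection h with h1 h2
            injection h1 with h3
            subst h3
            exact ⟨0, ((b' : A), false) :: R, by rw [hb, pow_one]⟩
    · -- head is a subalgebra letter
      have hb : blocks u us (inr b :: t) = ((b : A), false) :: blocks u us t := rfl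
      have hbc : φ (b : A) = 0 := hcent (inr b) mem_cons_self
      refine ⟨?_, ?_, ?_, by simp, fun b'' t'' h => ⟨blocks u us t, by injection h with h1 h2; injection h1 with h3; subst h3; rfl⟩⟩
      · rw [hb]; simp only [map_cons, prod_cons, ihprod, ev_cons, gl_inr]
      · rw [hb]; simp only [Chain']; rw [isChain_cons]
        refine ⟨?_, ihch⟩
        intro y hy
        rcases t with _ | ⟨z, t'⟩
        · simp [blocks] at hy
        · rcases z with c' | b''
          · obtain ⟨k, R, hR⟩ := ihheadl c' _ rfl
            rw [hR] at hy
            simp only [head?_cons, Option.mem_def, Option.some.injEq] at hy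
            rw [← hy]
            simp
          · exact absurd (hadj (inr b'') rfl) (by simp)
      · intro p hp
        rcases mem_cons.1 (hb ▸ hp) with h | h
        · subst h; exact ⟨by simpa using b.2, hbc⟩
        · exact ihmem p h

lemma vanish (φ : A →ₗ[ℂ] ℂ) (u us : A) {A₀ : Subalgebra ℂ A}
    (hmom : ∀ k : ℕ, 1 ≤ k → φ (u ^ k) = 0 ∧ φ (us ^ k) = 0)
    (hfree : ∀ L : List (A × Bool), L ≠ [] →
      (∀ p ∈ L, (if p.2 then p.1 ∈ Algebra.adjoin ℂ ({u, us} : Set A) else p.1 ∈ A₀)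
        ∧ φ p.1 = 0) →
      L.Chain' (fun p q => p.2 ≠ q.2) → φ (L.map Prod.fst).prod = 0)
    (L : List (Bool ⊕ ↥A₀)) (hne : L ≠ [])
    (hch : L.Chain' Rrel) (hcent : ∀ x ∈ L, cent φ x) :
    φ (ev u us L) = 0 := by
  obtain ⟨hprod, hbch, hmem, hheadl, hheadr⟩ := blocks_spec φ u us hmom L hch hcent
  have hbne : blocks u us L ≠ [] := by
    rcases L with _ | ⟨x, t⟩
    · exact absurd rfl hne
    · rcases x with c | b
      · obtain ⟨k, R, hR⟩ := hheadl c _ rfl; simp [hR]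
      · obtain ⟨R, hR⟩ := hheadr b _ rfl; simp [hR]
  rw [← hprod]
  exact hfree _ hbne hmem hbch


/-! ### local computations -/

attribute [local instance] Classical.propDecidable

lemma Tc_single_b (φ : A →ₗ[ℂ] ℂ) (u us : A) {A₀ : Subalgebra ℂ A} (p q : A) (b : ↥A₀) :
    Tc φ u us p [(inr b : Bool ⊕ ↥A₀)] q = 0 := by simp

lemma Tc_pair_b (φ : A →ₗ[ℂ] ℂ) (u us : A) {A₀ : Subalgebra ℂ A} (p q : A) (b b' : ↥A₀) :
    Tc φ u us p [(inr b : Bool ⊕ ↥A₀), inr b'] q = 0 := by simp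

lemma Tc_cancel (φ : A →ₗ[ℂ] ℂ) (u us : A) {A₀ : Subalgebra ℂ A}
    (huus : u * us = 1) (husu : us * u = 1) (p q : A) (c : Bool) :
    Tc φ u us p [(inl c : Bool ⊕ ↥A₀), inl (!c)] q = 0 := by
  cases c
  · simp only [Bool.not_false]
    simp only [Tc_cons_us, Tc_cons_u, Tc_nil, ev_cons, ev_nil, gl_true, mul_one, one_mul,
      add_zero]
    rw [← mul_assoc us u q, husu, one_mul, mul_assoc p us u, husu, mul_one]
    ring
  · simp only [Bool.not_true]
    simp only [Tc_cons_us, Tc_cons_u, Tc_nil, ev_cons, ev_nil, gl_false, mul_one, one_mul,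
      add_zero]
    ring

lemma ev_cancel (u us : A) {A₀ : Subalgebra ℂ A}
    (huus : u * us = 1) (husu : us * u = 1) (c : Bool) :
    ev u us [(inl c : Bool ⊕ ↥A₀), inl (!c)] = 1 := by
  cases c <;> simp [huus, husu]

/-- replace a middle segment having the same `ev` and the same local `Tc` -/
lemma S_congr_mid (φ : A →ₗ[ℂ] ℂ) (u us : A) {A₀ : Subalgebra ℂ A}
    (L1 M M' L2 : List (Bool ⊕ ↥A₀))
    (hev : ev u us M = ev u us M')
    (hM : ∀ p q, Tc φ u us p M q = Tc φ u us p M' q) :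
    Tc φ u us 1 (L1 ++ M ++ L2) 1 = Tc φ u us 1 (L1 ++ M' ++ L2) 1 := by
  rw [append_assoc, append_assoc,
    Tc_split φ u us L1 (M ++ L2), Tc_split φ u us L1 (M' ++ L2),
    Tc_split φ u us M L2, Tc_split φ u us M' L2]
  simp only [ev_append, hev, hM]

lemma S_center' (φ : A →ₗ[ℂ] ℂ) (u us : A) {A₀ : Subalgebra ℂ A}
    (L1 L2 : List (Bool ⊕ ↥A₀)) (b b0 : ↥A₀) (c : ℂ)
    (hco : (b : A) = (b0 : A) + c • (1 : A)) :
    Tc φ u us 1 (L1 ++ (inr b : Bool ⊕ ↥A₀) :: L2) 1 =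
      Tc φ u us 1 (L1 ++ (inr b0 : Bool ⊕ ↥A₀) :: L2) 1
      + c * Tc φ u us 1 (L1 ++ L2) 1 := by
  rw [show L1 ++ (inr b : Bool ⊕ ↥A₀) :: L2 = L1 ++ [(inr b : Bool ⊕ ↥A₀)] ++ L2 by simp,
    show L1 ++ (inr b0 : Bool ⊕ ↥A₀) :: L2
      = L1 ++ [(inr b0 : Bool ⊕ ↥A₀)] ++ L2 by simp]
  rw [append_assoc, append_assoc,
    Tc_split φ u us L1 ([(inr b : Bool ⊕ ↥A₀)] ++ L2),
    Tc_split φ u us L1 ([(inr b0 : Bool ⊕ ↥A₀)] ++ L2),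
    Tc_split φ u us [(inr b : Bool ⊕ ↥A₀)] L2,
    Tc_split φ u us [(inr b0 : Bool ⊕ ↥A₀)] L2,
    Tc_split φ u us L1 L2]
  simp only [Tc_single_b, Tc_nil, ev_append, ev_cons, ev_nil, gl_inr, mul_one, one_mul,
    add_zero, zero_add]
  rw [hco]
  rw [add_mul, smul_mul_assoc, one_mul, Tc_addQ, Tc_smulQ,
    mul_add, mul_smul_comm, Tc_addP, Tc_smulP]
  ring

lemma S_center (φ : A →ₗ[ℂ] ℂ) (u us : A) {A₀ : Subalgebra ℂ A}
    (hφ1 : φ 1 = 1) (L1 L2 : List (Bool ⊕ ↥A₀)) (b : ↥A₀) :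
    Tc φ u us 1 (L1 ++ (inr b : Bool ⊕ ↥A₀) :: L2) 1 =
      Tc φ u us 1 (L1 ++ (inr (b - (φ (b : A)) • 1) : Bool ⊕ ↥A₀) :: L2) 1
      + φ (b : A) * Tc φ u us 1 (L1 ++ L2) 1 := by
  refine S_center' φ u us L1 L2 b _ _ ?_
  push_cast
  simp

lemma exists_bad_pair {α : Type*} {R : α → α → Prop} :
    ∀ {L : List α}, ¬ L.Chain' R →
      ∃ (L1 : List α) (x y : α) (L2 : List α), L = L1 ++ x :: y :: L2 ∧ ¬ R x y := by
  intro L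
  induction L with
  | nil => intro h; exact absurd isChain_nil h
  | cons x t ih =>
    intro h
    rcases t with _ | ⟨y, t'⟩
    · exact absurd (isChain_singleton x) h
    · by_cases hxy : R x y
      · have h' : ¬ (y :: t').Chain' R := by
          intro hc; exact h (isChain_cons_cons.2 ⟨hxy, hc⟩)
        obtain ⟨L1, x', y', L2, heq, hxy'⟩ := ih h'
        exact ⟨x :: L1, x', y', L2, by rw [cons_append, ← heq], hxy'⟩
      · exact ⟨[], x, y, t', rfl, hxy⟩

/-- every term of the SD sum of a reduced word vanishes -/
lemma Tc_reduced (φ : A →ₗ[ℂ] ℂ) (u us : A) {A₀ : Subalgebra ℂ A}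
    (hmom : ∀ k : ℕ, 1 ≤ k → φ (u ^ k) = 0 ∧ φ (us ^ k) = 0)
    (hfree : ∀ L : List (A × Bool), L ≠ [] →
      (∀ p ∈ L, (if p.2 then p.1 ∈ Algebra.adjoin ℂ ({u, us} : Set A) else p.1 ∈ A₀)
        ∧ φ p.1 = 0) →
      L.Chain' (fun p q => p.2 ≠ q.2) → φ (L.map Prod.fst).prod = 0) :
    ∀ (L2 L1 : List (Bool ⊕ ↥A₀)), (L1 ++ L2).Chain' Rrel →
      (∀ x ∈ L1 ++ L2, cent φ x) → Tc φ u us (ev u us L1) L2 1 = 0 := by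
  intro L2
  induction L2 with
  | nil => intro L1 _ _; simp
  | cons x t ih =>
    intro L1 hch hcent
    have hassoc : L1 ++ x :: t = (L1 ++ [x]) ++ t := by simp
    have htail : Tc φ u us (ev u us L1 * gl u us x) t 1 = 0 := by
      have : ev u us L1 * gl u us x = ev u us (L1 ++ [x]) := by simp
      rw [this]
      exact ih (L1 ++ [x]) (by rw [← hassoc]; exact hch) (by rw [← hassoc]; exact hcent)
    rcases x with c | b
    · cases c
      · -- us letter : suffix is centered alternating
        have hsuf : φ (us * (ev u us t * 1)) = 0 := by
          have : us * (ev u us t * 1) = ev u us ((inl false : Bool ⊕ ↥A₀) :: t) := by simp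
          rw [this]
          exact vanish φ u us hmom hfree _ (by simp)
            hch.right_of_append
            (fun y hy => hcent y (mem_append_right _ hy))
        rw [Tc_cons_us, hsuf]
        simp only [mul_zero, neg_zero, zero_add]
        simpa using htail
      · -- u letter : prefix is centered alternating
        have hpre : φ (ev u us L1 * u) = 0 := by
          have : ev u us L1 * u = ev u us (L1 ++ [(inl true : Bool ⊕ ↥A₀)]) := by simp
          rw [this]
          exact vanish φ u us hmom hfree _ (by simp)
            (hassoc ▸ hch).left_of_append
            (fun y hy => hcent y (by rw [hassoc]; exact mem_append_left _ hy))
        rw [Tc_cons_u, hpre]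
        simp only [zero_mul, zero_add]
        simpa using htail
    · rw [Tc_cons_b]
      simpa using htail

/-- the number of non-centered letters -/
noncomputable def cnt (φ : A →ₗ[ℂ] ℂ) {A₀ : Subalgebra ℂ A} (L : List (Bool ⊕ ↥A₀)) : ℕ :=
  L.countP (fun x => decide (¬ cent φ x))

lemma cnt_append (φ : A →ₗ[ℂ] ℂ) {A₀ : Subalgebra ℂ A} (L1 L2 : List (Bool ⊕ ↥A₀)) :
    cnt φ (L1 ++ L2) = cnt φ L1 + cnt φ L2 := countP_append

lemma cnt_cons (φ : A →ₗ[ℂ] ℂ) {A₀ : Subalgebra ℂ A} (x : Bool ⊕ ↥A₀) (L : List (Bool ⊕ ↥A₀)) :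
    cnt φ (x :: L) = cnt φ L + if cent φ x then 0 else 1 := by
  rw [cnt, countP_cons]
  by_cases h : cent φ x <;> simp [cnt, h]

/-- Main combinatorial theorem: the Schwinger–Dyson sum of any word vanishes. -/
theorem S_zero (φ : A →ₗ[ℂ] ℂ) (u us : A) {A₀ : Subalgebra ℂ A}
    (hφ1 : φ 1 = 1) (huus : u * us = 1) (husu : us * u = 1)
    (hmom : ∀ k : ℕ, 1 ≤ k → φ (u ^ k) = 0 ∧ φ (us ^ k) = 0)
    (hfree : ∀ L : List (A × Bool), L ≠ [] →
      (∀ p ∈ L, (if p.2 then p.1 ∈ Algebra.adjoin ℂ ({u, us} : Set A) else p.1 ∈ A₀)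
        ∧ φ p.1 = 0) →
      L.Chain' (fun p q => p.2 ≠ q.2) → φ (L.map Prod.fst).prod = 0) :
    ∀ (N : ℕ) (L : List (Bool ⊕ ↥A₀)), 2 * L.length + cnt φ L ≤ N →
      Tc φ u us 1 L 1 = 0 := by
  intro N
  induction N with
  | zero =>
    intro L hL
    have : L = [] := by
      cases L with
      | nil => rfl
      | cons x t => simp at hL
    subst this; simp
  | succ N ihN =>
    intro L hL
    rcases Classical.em (L.Chain' Rrel) with hch | hch
    · rcases Classical.em (∀ x ∈ L, cent φ x) with hcent | hcent
      · have := Tc_reduced φ u us hmom hfree L [] (by simpa using hch) (by simpa using hcent)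
        simpa using this
      · -- center an uncentered subalgebra letter
        push_neg at hcent
        obtain ⟨x, hx, hnc⟩ := hcent
        rcases x with c | b
        · exact absurd (cent_inl φ c) hnc
        · obtain ⟨L1, L2, rfl⟩ := append_of_mem hx
          have hb : φ (b : A) ≠ 0 := hnc
          rw [S_center φ u us hφ1 L1 L2 b]
          have hc0 : cent φ (inr (b - (φ (b : A)) • 1) : Bool ⊕ ↥A₀) := by
            rw [cent_inr]
            push_cast
            simp [hφ1]
          have h1 : Tc φ u us 1 (L1 ++ (inr (b - (φ (b : A)) • 1) : Bool ⊕ ↥A₀) :: L2) 1 = 0 := by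
            apply ihN
            simp only [cnt_append, cnt_cons, length_append, length_cons,
              if_pos hc0, if_neg hnc] at hL ⊢
            omega
          have h2 : Tc φ u us 1 (L1 ++ L2) 1 = 0 := by
            apply ihN
            simp only [cnt_append, cnt_cons, length_append, length_cons,
              if_neg hnc] at hL ⊢
            omega
          rw [h1, h2]
          ring
    · -- a bad adjacent pair : cancel or merge
      obtain ⟨L1, x, y, L2, rfl, hxy⟩ := exists_bad_pair hch
      rcases x with c | b <;> rcases y with c' | b'
      · -- two unitary letters with different booleans
        have hne : c ≠ c' := fun h => hxy (by simp [h])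
        have hcc : c' = !c := by
          revert hne; cases c <;> cases c' <;> decide
        subst hcc
        have heq : Tc φ u us 1 (L1 ++ (inl c : Bool ⊕ ↥A₀) :: inl (!c) :: L2) 1
            = Tc φ u us 1 (L1 ++ L2) 1 := by
          have := S_congr_mid φ u us L1 [(inl c : Bool ⊕ ↥A₀), inl (!c)] [] L2
            (by rw [ev_cancel u us huus husu c]; simp)
            (fun p q => by rw [Tc_cancel φ u us huus husu p q c]; simp)
          simpa using this
        rw [heq]
        apply ihN
        simp only [cnt_append, cnt_cons, length_append, length_cons,
          if_pos (cent_inl φ c), if_pos (cent_inl φ (!c))] at hL ⊢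
        omega
      · exact absurd (Rrel_inl_inr c b') hxy
      · exact absurd (Rrel_inr_inl c' b) hxy
      · -- two subalgebra letters : merge them
        have heq : Tc φ u us 1 (L1 ++ (inr b : Bool ⊕ ↥A₀) :: inr b' :: L2) 1
            = Tc φ u us 1 (L1 ++ (inr (b * b') : Bool ⊕ ↥A₀) :: L2) 1 := by
          have := S_congr_mid φ u us L1 [(inr b : Bool ⊕ ↥A₀), inr b'] [(inr (b * b') : Bool ⊕ ↥A₀)] L2
            (by push_cast [ev_cons, ev_nil]; simp [mul_assoc])
            (fun p q => by rw [Tc_pair_b, Tc_single_b])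
          simpa using this
        rw [heq]
        apply ihN
        have hle : (if cent φ (inr (b * b') : Bool ⊕ ↥A₀) then 0 else 1) ≤ 1 := by
          split <;> omega
        simp only [cnt_append, cnt_cons, length_append, length_cons] at hL ⊢
        omega


/-! ### from the free algebra to words -/

section FreeAlg

open TensorProduct

variable {n : ℕ} (φ : A →ₗ[ℂ] ℂ) (u us : A) (a : Fin n → A)

local notation "F" => FreeAlgebra ℂ (Bool ⊕ Fin n)

/-- the evaluation homomorphism -/
noncomputable def ψ : F →ₐ[ℂ] A :=
  FreeAlgebra.lift ℂ (fun x => Sum.elim (fun b => if b then u else us) a x)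

/-- the pair-of-states functional with a left context -/
noncomputable def Gp (p : A) : F ⊗[ℂ] F →ₗ[ℂ] ℂ :=
  TensorProduct.lift ((LinearMap.mul ℂ ℂ).compl₁₂
    (φ ∘ₗ (LinearMap.mulLeft ℂ p) ∘ₗ (ψ u us a).toLinearMap)
    (φ ∘ₗ (ψ u us a).toLinearMap))

@[simp] lemma Gp_tmul (p : A) (P Q : F) :
    Gp φ u us a p (P ⊗ₜ[ℂ] Q) = φ (p * ψ u us a P) * φ (ψ u us a Q) := by
  simp [Gp]

lemma Gp_mul_left (p : A) (P : F) (ξ : F ⊗[ℂ] F) :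
    Gp φ u us a p ((P ⊗ₜ[ℂ] (1 : F)) * ξ) = Gp φ u us a (p * ψ u us a P) ξ := by
  induction ξ using TensorProduct.induction_on with
  | zero => simp
  | tmul y z => simp [Algebra.TensorProduct.tmul_mul_tmul, mul_assoc]
  | add y z hy hz => rw [mul_add, map_add, map_add, hy, hz]

/-- monomial attached to a list of letters -/
noncomputable def mono (M : List (Bool ⊕ Fin n)) : F :=
  (M.map (FreeAlgebra.ι ℂ)).prod

@[simp] lemma mono_nil : mono ([] : List (Bool ⊕ Fin n)) = 1 := rfl

@[simp] lemma mono_cons (x : Bool ⊕ Fin n) (M : List (Bool ⊕ Fin n)) :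
    mono (x :: M) = FreeAlgebra.ι ℂ x * mono M := by simp [mono]

lemma mono_append (M1 M2 : List (Bool ⊕ Fin n)) :
    mono (M1 ++ M2) = mono M1 * mono M2 := by simp [mono]

variable {A₀ : Subalgebra ℂ A} (ha : ∀ i, a i ∈ A₀)

/-- letters to decorated letters -/
def hmap (ha : ∀ i, a i ∈ A₀) : Bool ⊕ Fin n → Bool ⊕ ↥A₀ :=
  Sum.map id (fun i => ⟨a i, ha i⟩)

lemma psi_iota (x : Bool ⊕ Fin n) :
    ψ u us a (FreeAlgebra.ι ℂ x) = gl u us (hmap a ha x) := by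
  rcases x with c | i
  · cases c <;> simp [ψ, hmap, gl]
  · simp [ψ, hmap, gl]

lemma psi_mono (M : List (Bool ⊕ Fin n)) :
    ψ u us a (mono M) = ev u us (M.map (hmap a ha)) := by
  induction M with
  | nil => simp
  | cons x t ih => simp [map_mul, psi_iota u us a ha, ih]

end FreeAlg


section Bridge

open TensorProduct

variable {n : ℕ} (φ : A →ₗ[ℂ] ℂ) (u us : A) (a : Fin n → A)
variable {A₀ : Subalgebra ℂ A} (ha : ∀ i, a i ∈ A₀)
variable (Dq : FreeAlgebra ℂ (Bool ⊕ Fin n) →ₗ[ℂ]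
      (FreeAlgebra ℂ (Bool ⊕ Fin n) ⊗[ℂ] FreeAlgebra ℂ (Bool ⊕ Fin n)))

local notation "F" => FreeAlgebra ℂ (Bool ⊕ Fin n)

lemma Dq_one
    (hLeib : ∀ P Q : F, Dq (P * Q) = Dq P * (1 ⊗ₜ[ℂ] Q) + (P ⊗ₜ[ℂ] 1) * Dq Q) :
    Dq 1 = 0 := by
  have h := hLeib 1 1
  rw [mul_one, show ((1 : F) ⊗ₜ[ℂ] (1 : F)) = (1 : F ⊗[ℂ] F) from
    (Algebra.TensorProduct.one_def).symm, mul_one, one_mul] at h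
  have h2 : Dq (1 : F) + 0 = Dq 1 + Dq 1 := by rw [add_zero]; exact h
  exact (add_left_cancel h2).symm

lemma Gp_Dq_mono
    (hDqu : Dq (FreeAlgebra.ι ℂ (Sum.inl true))
      = FreeAlgebra.ι ℂ (Sum.inl true) ⊗ₜ[ℂ] 1)
    (hDqus : Dq (FreeAlgebra.ι ℂ (Sum.inl false))
      = -((1 : F) ⊗ₜ[ℂ] FreeAlgebra.ι ℂ (Sum.inl false)))
    (hDqa : ∀ i : Fin n, Dq (FreeAlgebra.ι ℂ (Sum.inr i)) = 0)
    (hLeib : ∀ P Q : F, Dq (P * Q) = Dq P * (1 ⊗ₜ[ℂ] Q) + (P ⊗ₜ[ℂ] 1) * Dq Q) :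
    ∀ (M : List (Bool ⊕ Fin n)) (p : A),
      Gp φ u us a p (Dq (mono M)) = Tc φ u us p (M.map (hmap a ha)) 1 := by
  intro M
  induction M with
  | nil =>
    intro p
    rw [mono_nil, Dq_one Dq hLeib]
    simp
  | cons x t ih =>
    intro p
    rw [mono_cons, hLeib, map_add, Gp_mul_left, ih, psi_iota u us a ha]
    have hterm : Gp φ u us a p (Dq (FreeAlgebra.ι ℂ x) * ((1 : F) ⊗ₜ[ℂ] mono t))
        = (match hmap a ha x with
          | inl true => φ (p * u) * φ (ev u us (t.map (hmap a ha)) * 1)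
          | inl false => -(φ p * φ (us * (ev u us (t.map (hmap a ha)) * 1)))
          | inr _ => 0) := by
      rcases x with c | i
      · cases c
        · rw [hDqus,
            show (-((1:F) ⊗ₜ[ℂ] FreeAlgebra.ι ℂ (Sum.inl false)))
              = ((-1 : F) ⊗ₜ[ℂ] FreeAlgebra.ι ℂ (Sum.inl false)) from
              (TensorProduct.neg_tmul _ _).symm,
            Algebra.TensorProduct.tmul_mul_tmul, mul_one, TensorProduct.neg_tmul,
            map_neg, Gp_tmul]
          have hψ : ψ u us a (FreeAlgebra.ι ℂ (Sum.inl false) * mono t)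
              = us * ev u us (t.map (hmap a ha)) := by
            rw [map_mul, psi_iota u us a ha, psi_mono u us a ha]
            simp [hmap]
          rw [hψ]
          simp [hmap]
        · rw [hDqu]
          simp only [Algebra.TensorProduct.tmul_mul_tmul, one_mul, mul_one,
            Gp_tmul, psi_iota u us a ha, psi_mono u us a ha]
          simp [hmap]
      · rw [hDqa i]
        simp [hmap]
    rw [hterm, map_cons, Tc_cons]

lemma mono_span :
    ∀ P : FreeAlgebra ℂ (Bool ⊕ Fin n),
      P ∈ Submodule.span ℂ {x : F | ∃ M : List (Bool ⊕ Fin n), x = mono M} := by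
  intro P
  induction P using FreeAlgebra.induction with
  | grade0 r =>
    rw [Algebra.algebraMap_eq_smul_one]
    exact Submodule.smul_mem _ r (Submodule.subset_span ⟨[], by simp⟩)
  | grade1 x =>
    exact Submodule.subset_span ⟨[x], by simp⟩
  | mul P Q hP hQ =>
    induction hP using Submodule.span_induction with
    | mem x hx =>
      induction hQ using Submodule.span_induction with
      | mem y hy =>
        obtain ⟨M1, rfl⟩ := hx
        obtain ⟨M2, rfl⟩ := hy
        exact Submodule.subset_span ⟨M1 ++ M2, (mono_append M1 M2).symm⟩
      | zero => rw [mul_zero]; exact Submodule.zero_mem _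
      | add y z _ _ hy hz => rw [mul_add]; exact Submodule.add_mem _ hy hz
      | smul c y _ hy => rw [mul_smul_comm]; exact Submodule.smul_mem _ c hy
    | zero => rw [zero_mul]; exact Submodule.zero_mem _
    | add x y _ _ hx hy => rw [add_mul]; exact Submodule.add_mem _ hx hy
    | smul c x _ hx => rw [smul_mul_assoc]; exact Submodule.smul_mem _ c hx
  | add P Q hP hQ => exact Submodule.add_mem _ hP hQ

end Bridge

end HaarSD



open scoped TensorProduct

/-- Schwinger-Dyson equation for a Haar unitary: let `(A, φ)` be a noncommutative
probability space, `a i ∈ A₀` elements of a unital subalgebra, and `u` a Haar unitary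
(with inverse `us`) free from `A₀`.  Then for every polynomial `P` in the free algebra
on the letters `u, u*, a i` and for any linear map `∂` satisfying the defining
properties of the free difference quotient with respect to `u`
(`∂u = u ⊗ 1`, `∂u* = −1 ⊗ u*`, `∂ a_i = 0`, Leibniz rule), one has
`(φ ⊗ φ)(Dq P) = 0` after evaluation. -/
theorem haar_unitary_schwinger_dyson
    {A : Type*} [Ring A] [Algebra ℂ A]
    (φ : A →ₗ[ℂ] ℂ) (hφ1 : φ 1 = 1)
    (A₀ : Subalgebra ℂ A) (n : ℕ) (a : Fin n → A) (ha : ∀ i, a i ∈ A₀)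
    (u us : A) (huus : u * us = 1) (husu : us * u = 1)
    (hmom : ∀ k : ℕ, 1 ≤ k → φ (u ^ k) = 0 ∧ φ (us ^ k) = 0)
    (hfree : ∀ L : List (A × Bool), L ≠ [] →
      (∀ p ∈ L, (if p.2 then p.1 ∈ Algebra.adjoin ℂ ({u, us} : Set A) else p.1 ∈ A₀)
        ∧ φ p.1 = 0) →
      L.Chain' (fun p q => p.2 ≠ q.2) → φ (L.map Prod.fst).prod = 0)
    (Dq : FreeAlgebra ℂ (Bool ⊕ Fin n) →ₗ[ℂ]
      (FreeAlgebra ℂ (Bool ⊕ Fin n) ⊗[ℂ] FreeAlgebra ℂ (Bool ⊕ Fin n)))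
    (hDqu : Dq (FreeAlgebra.ι ℂ (Sum.inl true))
      = FreeAlgebra.ι ℂ (Sum.inl true) ⊗ₜ[ℂ] 1)
    (hDqus : Dq (FreeAlgebra.ι ℂ (Sum.inl false))
      = -((1 : FreeAlgebra ℂ (Bool ⊕ Fin n)) ⊗ₜ[ℂ] FreeAlgebra.ι ℂ (Sum.inl false)))
    (hDqa : ∀ i : Fin n, Dq (FreeAlgebra.ι ℂ (Sum.inr i)) = 0)
    (hLeib : ∀ P Q : FreeAlgebra ℂ (Bool ⊕ Fin n),
      Dq (P * Q) = Dq P * (1 ⊗ₜ[ℂ] Q) + (P ⊗ₜ[ℂ] 1) * Dq Q) :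
    ∀ P : FreeAlgebra ℂ (Bool ⊕ Fin n),
      TensorProduct.lift
        ((LinearMap.mul ℂ ℂ).compl₁₂
          (φ ∘ₗ (FreeAlgebra.lift ℂ
            (fun x => Sum.elim (fun b => if b then u else us) a x)).toLinearMap)
          (φ ∘ₗ (FreeAlgebra.lift ℂ
            (fun x => Sum.elim (fun b => if b then u else us) a x)).toLinearMap))
        (Dq P) = 0 := by
  intro P
  have hG : ∀ ξ : FreeAlgebra ℂ (Bool ⊕ Fin n) ⊗[ℂ] FreeAlgebra ℂ (Bool ⊕ Fin n),
      TensorProduct.lift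
        ((LinearMap.mul ℂ ℂ).compl₁₂
          (φ ∘ₗ (FreeAlgebra.lift ℂ
            (fun x => Sum.elim (fun b => if b then u else us) a x)).toLinearMap)
          (φ ∘ₗ (FreeAlgebra.lift ℂ
            (fun x => Sum.elim (fun b => if b then u else us) a x)).toLinearMap)) ξ
      = HaarSD.Gp φ u us a 1 ξ := by
    intro ξ
    induction ξ using TensorProduct.induction_on with
    | zero => simp
    | tmul y z => simp [HaarSD.Gp, HaarSD.ψ]
    | add y z hy hz => rw [map_add, map_add, hy, hz]
  rw [hG]
  have hmono : ∀ M : List (Bool ⊕ Fin n),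
      HaarSD.Gp φ u us a 1 (Dq (HaarSD.mono M)) = 0 := by
    intro M
    rw [HaarSD.Gp_Dq_mono φ u us a ha Dq hDqu hDqus hDqa hLeib M 1]
    exact HaarSD.S_zero φ u us hφ1 huus husu hmom hfree
      (2 * (M.map (HaarSD.hmap a ha)).length + HaarSD.cnt φ (M.map (HaarSD.hmap a ha)))
      (M.map (HaarSD.hmap a ha)) le_rfl
  have hsp := HaarSD.mono_span (n := n) P
  induction hsp using Submodule.span_induction with
  | mem x hx => obtain ⟨M, rfl⟩ := hx; exact hmono M
  | zero => simp
  | add x y _ _ hx hy => rw [map_add, map_add, hx, hy, add_zero]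
  | smul c x _ hx => rw [map_smul, map_smul, hx, smul_zero]
end
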